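/- Let X = (Ω,C) be a symmetric Jordan configuration of rank at most 5 which is not homogeneous (the diagonal 1_Ω is not a class of C). Then X has exactly two fibers Ω_1, Ω_2 (so 1_{Ω_1} and 1_{Ω_2} are classes and Ω = Ω_1 ∪ Ω_2); the set (Ω_1×Ω_2) ∪ (Ω_2×Ω_1) is a single class of C; for i = 1,2 the collection C^{ii} := {C ∈ C : C ⊆ Ω_i×Ω_i} is a symmetric association scheme on Ω_i; and the partition C^{11} ∪ C^{22} ∪ {Ω_1×Ω_2, Ω_2×Ω_1} of Ω×Ω is a coherent configuration whose symmetrization (merging each class with its transpose) is C. In particular X is not proper. -/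

import Mathlib

open Matrix

noncomputable section

namespace JordanPaper

open scoped Classical

variable {Ω : Type*}

/-- The adjacency matrix (over `F`) of a binary relation on `Ω`. -/
def adj (F : Type*) [Zero F] [One F] (c : Set (Ω × Ω)) : Matrix Ω Ω F :=
  Matrix.of fun a b => if (a, b) ∈ c then 1 else 0

/-- The all-ones matrix. -/
def allOnes (F : Type*) [One F] : Matrix Ω Ω F :=
  Matrix.of fun _ _ => 1

/-- The diagonal relation `1_Δ` on a subset `Δ ⊆ Ω`. -/
def diagRel (Δ : Set Ω) : Set (Ω × Ω) := {p | p.1 = p.2 ∧ p.1 ∈ Δ}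

/-- The transposed relation. -/
def transposeRel (c : Set (Ω × Ω)) : Set (Ω × Ω) := {p | (p.2, p.1) ∈ c}

/-- `outSet c α = c(α) = {β | (α,β) ∈ c}`. -/
def outSet (c : Set (Ω × Ω)) (α : Ω) : Set Ω := {β | (α, β) ∈ c}

/-- A partition of `Ω × Ω` into nonempty pairwise disjoint classes. -/
def IsPartition (P : Set (Set (Ω × Ω))) : Prop :=
  (∀ c ∈ P, c.Nonempty) ∧ (∀ c ∈ P, ∀ d ∈ P, c ≠ d → c ∩ d = ∅) ∧ ⋃₀ P = Set.univ

/-- A partition of `Δ × Δ` into nonempty pairwise disjoint classes. -/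
def IsPartitionOn (Δ : Set Ω) (P : Set (Set (Ω × Ω))) : Prop :=
  (∀ c ∈ P, c.Nonempty) ∧ (∀ c ∈ P, ∀ d ∈ P, c ≠ d → c ∩ d = ∅) ∧ ⋃₀ P = Δ ×ˢ Δ

/-- A rainbow: a partition of `Ω × Ω` such that the diagonal is a union of classes
and the set of classes is closed under transposition. -/
def IsRainbow (P : Set (Set (Ω × Ω))) : Prop :=
  IsPartition P ∧
  (∀ c ∈ P, (c ∩ diagRel (Set.univ : Set Ω)).Nonempty → c ⊆ diagRel (Set.univ : Set Ω)) ∧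
  (∀ c ∈ P, transposeRel c ∈ P)

/-- `|c(α) ∩ dᵀ(β)|`. -/
def cnum (c d : Set (Ω × Ω)) (α β : Ω) : ℕ :=
  (outSet c α ∩ outSet (transposeRel d) β).ncard

/-- `|c(α) ∩ dᵀ(β)| + |d(α) ∩ cᵀ(β)|`. -/
def jnum (c d : Set (Ω × Ω)) (α β : Ω) : ℕ :=
  cnum c d α β + cnum d c α β

/-- The coherence (intersection-number) condition. -/
def IsCoherentCond (P : Set (Set (Ω × Ω))) : Prop :=
  ∀ c ∈ P, ∀ d ∈ P, ∀ f ∈ P, ∀ p ∈ f, ∀ q ∈ f,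
    cnum c d (p : Ω × Ω).1 (p : Ω × Ω).2 = cnum c d (q : Ω × Ω).1 (q : Ω × Ω).2

/-- The Jordan (symmetrized intersection-number) condition. -/
def IsJordanCond (P : Set (Set (Ω × Ω))) : Prop :=
  ∀ c ∈ P, ∀ d ∈ P, ∀ f ∈ P, ∀ p ∈ f, ∀ q ∈ f,
    jnum c d (p : Ω × Ω).1 (p : Ω × Ω).2 = jnum c d (q : Ω × Ω).1 (q : Ω × Ω).2

/-- A coherent configuration. -/
def IsCoherentConfig (P : Set (Set (Ω × Ω))) : Prop := IsRainbow P ∧ IsCoherentCond P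

/-- A Jordan configuration. -/
def IsJordanConfig (P : Set (Set (Ω × Ω))) : Prop := IsRainbow P ∧ IsJordanCond P

/-- An association scheme on a subset `Δ` (homogeneous coherent configuration on `Δ`). -/
def IsAssocSchemeOn (Δ : Set Ω) (P : Set (Set (Ω × Ω))) : Prop :=
  IsPartitionOn Δ P ∧ diagRel Δ ∈ P ∧ (∀ c ∈ P, transposeRel c ∈ P) ∧ IsCoherentCond P

/-- The Jordan product of matrices. -/
def jmul (F : Type*) [Field F] [Fintype Ω] (x y : Matrix Ω Ω F) : Matrix Ω Ω F :=
  (2 : F)⁻¹ • (x * y + y * x)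

/-- A coherent algebra. -/
def IsCoherentAlgebra (F : Type*) [Field F] [Fintype Ω] [DecidableEq Ω]
    (A : Submodule F (Matrix Ω Ω F)) : Prop :=
  (1 : Matrix Ω Ω F) ∈ A ∧ allOnes F ∈ A ∧ (∀ x ∈ A, xᵀ ∈ A) ∧
  (∀ x ∈ A, ∀ y ∈ A, x * y ∈ A) ∧ (∀ x ∈ A, ∀ y ∈ A, Matrix.hadamard x y ∈ A)

/-- A coherent Jordan algebra. -/
def IsCoherentJAlgebra (F : Type*) [Field F] [Fintype Ω] [DecidableEq Ω]
    (A : Submodule F (Matrix Ω Ω F)) : Prop :=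
  (1 : Matrix Ω Ω F) ∈ A ∧ allOnes F ∈ A ∧ (∀ x ∈ A, xᵀ ∈ A) ∧
  (∀ x ∈ A, ∀ y ∈ A, jmul F x y ∈ A) ∧ (∀ x ∈ A, ∀ y ∈ A, Matrix.hadamard x y ∈ A)

section Lemmas

variable {P : Set (Set (Ω × Ω))}

lemma mem_transposeRel {c : Set (Ω × Ω)} {a b : Ω} :
    (a, b) ∈ transposeRel c ↔ (b, a) ∈ c := Iff.rfl

lemma mem_outSet {c : Set (Ω × Ω)} {a b : Ω} : b ∈ outSet c a ↔ (a, b) ∈ c := Iff.rfl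

lemma ne_of_mem_notMem {c d : Set (Ω × Ω)} {p : Ω × Ω} (h : p ∈ c) (h' : p ∉ d) : c ≠ d :=
  fun he => h' (he ▸ h)

lemma IsPartition.exists_mem (hP : IsPartition P) (p : Ω × Ω) : ∃ c ∈ P, p ∈ c := by
  have := hP.2.2
  rw [Set.sUnion_eq_univ_iff] at this
  exact this p

lemma IsPartition.class_unique (hP : IsPartition P) {c d : Set (Ω × Ω)} {p : Ω × Ω}
    (hc : c ∈ P) (hd : d ∈ P) (hpc : p ∈ c) (hpd : p ∈ d) : c = d := by
  by_contra h
  have := hP.2.1 c hc d hd h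
  exact absurd (Set.mem_inter hpc hpd) (by rw [this]; exact id)

/-- Standing hypotheses: a symmetric Jordan configuration with two fibers `X`, `Y`
and the full cross class. -/
structure Setup (Q : Set (Set (Ω × Ω))) (X Y : Set Ω) : Prop where
  rain : IsRainbow Q
  jord : IsJordanCond Q
  symm : ∀ c ∈ Q, transposeRel c = c
  rank5 : Q.ncard ≤ 5
  dX : diagRel X ∈ Q
  dY : diagRel Y ∈ Q
  disj : X ∩ Y = ∅
  cover : X ∪ Y = Set.univ
  neX : X.Nonempty
  neY : Y.Nonempty

namespace Setup

variable {X Y : Set Ω}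

lemma part (S : Setup P X Y) : IsPartition P := S.rain.1

lemma swap (S : Setup P X Y) : Setup P Y X where
  rain := S.rain
  jord := S.jord
  symm := S.symm
  rank5 := S.rank5
  dX := S.dY
  dY := S.dX
  disj := by rw [Set.inter_comm]; exact S.disj
  cover := by rw [Set.union_comm]; exact S.cover
  neX := S.neY
  neY := S.neX

lemma mem_or_mem (S : Setup P X Y) (x : Ω) : x ∈ X ∨ x ∈ Y := by
  have : x ∈ X ∪ Y := by rw [S.cover]; trivial
  exact this

lemma not_both (S : Setup P X Y) {x : Ω} (hx : x ∈ X) (hy : x ∈ Y) : False := by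
  have : x ∈ X ∩ Y := ⟨hx, hy⟩
  rw [S.disj] at this
  exact this

lemma mem_Y_of_not_X (S : Setup P X Y) {x : Ω} (hx : x ∉ X) : x ∈ Y :=
  (S.mem_or_mem x).resolve_left hx

end Setup

end Lemmas
section Lemmas2

variable {P : Set (Set (Ω × Ω))} {X Y : Set Ω}

lemma six_distinct_ncard {γ : Type*} [Finite γ] {s : Set γ} {a b c d e f : γ}
    (ha : a ∈ s) (hb : b ∈ s) (hc : c ∈ s) (hd : d ∈ s) (he : e ∈ s) (hf : f ∈ s)
    (hab : a ≠ b) (hac : a ≠ c) (had : a ≠ d) (hae : a ≠ e) (haf : a ≠ f)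
    (hbc : b ≠ c) (hbd : b ≠ d) (hbe : b ≠ e) (hbf : b ≠ f)
    (hcd : c ≠ d) (hce : c ≠ e) (hcf : c ≠ f)
    (hde : d ≠ e) (hdf : d ≠ f) (hef : e ≠ f) : 6 ≤ s.ncard := by
  classical
  have hsub : ({a, b, c, d, e, f} : Set γ) ⊆ s := by
    intro x hx
    simp only [Set.mem_insert_iff, Set.mem_singleton_iff] at hx
    rcases hx with rfl | rfl | rfl | rfl | rfl | rfl <;> assumption
  have h6 : ({a, b, c, d, e, f} : Set γ).ncard = 6 := by
    rw [Set.ncard_insert_of_notMem (by simp [hab, hac, had, hae, haf]),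
      Set.ncard_insert_of_notMem (by simp [hbc, hbd, hbe, hbf]),
      Set.ncard_insert_of_notMem (by simp [hcd, hce, hcf]),
      Set.ncard_insert_of_notMem (by simp [hde, hdf]),
      Set.ncard_insert_of_notMem (by simp [hef]), Set.ncard_singleton]
  rw [← h6]
  exact Set.ncard_le_ncard hsub (Set.toFinite s)

lemma outSet_diagRel (Δ : Set Ω) (β : Ω) :
    outSet (diagRel Δ) β = if β ∈ Δ then {β} else ∅ := by
  ext γ
  simp only [mem_outSet, diagRel, Set.mem_setOf_eq]
  split_ifs with h
  · constructor
    · rintro ⟨rfl, _⟩; rfl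
    · rintro rfl; exact ⟨rfl, h⟩
  · constructor
    · rintro ⟨rfl, hm⟩; exact h hm
    · rintro ⟨⟩

lemma transposeRel_diagRel (Δ : Set Ω) : transposeRel (diagRel Δ) = diagRel Δ := by
  ext ⟨a, b⟩
  simp only [transposeRel, diagRel, Set.mem_setOf_eq]
  constructor
  · rintro ⟨rfl, h⟩; exact ⟨rfl, h⟩
  · rintro ⟨rfl, h⟩; exact ⟨rfl, h⟩

/-- `jnum` against a diagonal class counts fiber membership of the two endpoints. -/
lemma jnum_diag' (hsym : ∀ c ∈ P, transposeRel c = c) {c : Set (Ω × Ω)} (hc : c ∈ P) (Δ : Set Ω)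
    {α β : Ω} (hp : (α, β) ∈ c) :
    jnum c (diagRel Δ) α β = (if α ∈ Δ then 1 else 0) + (if β ∈ Δ then 1 else 0) := by
  have hcs := hsym c hc
  have h1 : cnum c (diagRel Δ) α β = if β ∈ Δ then 1 else 0 := by
    unfold cnum
    rw [transposeRel_diagRel, outSet_diagRel]
    split_ifs with h
    · rw [Set.inter_eq_self_of_subset_right (by simpa [mem_outSet] using hp)]
      exact Set.ncard_singleton β
    · simp
  have h2 : cnum (diagRel Δ) c α β = if α ∈ Δ then 1 else 0 := by
    unfold cnum
    rw [hcs, outSet_diagRel]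
    have hba : (β, α) ∈ c := by rw [← hcs]; exact hp
    split_ifs with h
    · rw [Set.inter_eq_self_of_subset_left (by simpa [mem_outSet] using hba)]
      exact Set.ncard_singleton α
    · simp
  unfold jnum
  rw [h1, h2]
  omega

/-- Fiber-parity: for any class `c` and diag class `Δ`, the number of endpoints in `Δ`
is constant along `c`. -/
lemma chi' (hJ : IsJordanCond P) (hsym : ∀ c ∈ P, transposeRel c = c)
    {c : Set (Ω × Ω)} (hc : c ∈ P) {Δ : Set Ω}
    (hΔ : diagRel Δ ∈ P) {α β α' β' : Ω} (hp : (α, β) ∈ c) (hq : (α', β') ∈ c) :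
    (if α ∈ Δ then 1 else 0) + (if β ∈ Δ then 1 else 0) =
      (if α' ∈ Δ then 1 else 0) + ((if β' ∈ Δ then 1 else 0) : ℕ) := by
  have := hJ c hc (diagRel Δ) hΔ c hc (α, β) hp (α', β') hq
  rwa [jnum_diag' hsym hc Δ hp, jnum_diag' hsym hc Δ hq] at this

namespace Setup

lemma chi (S : Setup P X Y) {c : Set (Ω × Ω)} (hc : c ∈ P) {Δ : Set Ω}
    (hΔ : diagRel Δ ∈ P) {α β α' β' : Ω} (hp : (α, β) ∈ c) (hq : (α', β') ∈ c) :
    (if α ∈ Δ then 1 else 0) + (if β ∈ Δ then 1 else 0) =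
      (if α' ∈ Δ then 1 else 0) + ((if β' ∈ Δ then 1 else 0) : ℕ) :=
  chi' S.jord S.symm hc hΔ hp hq

/-- Degrees are constant on fibers. -/
lemma deg_const (S : Setup P X Y) {c : Set (Ω × Ω)} (hc : c ∈ P) {Δ : Set Ω}
    (hΔ : diagRel Δ ∈ P) {α α' : Ω} (hα : α ∈ Δ) (hα' : α' ∈ Δ) :
    (outSet c α).ncard = (outSet c α').ncard := by
  have hcs := S.symm c hc
  have key : ∀ x : Ω, jnum c c x x = 2 * (outSet c x).ncard := by
    intro x
    unfold jnum cnum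
    rw [hcs, Set.inter_self]
    omega
  have := S.jord c hc c hc (diagRel Δ) hΔ (α, α) ⟨rfl, hα⟩ (α', α') ⟨rfl, hα'⟩
  rw [key α, key α'] at this
  omega

/-- Every class containing a diagonal point is one of the two diagonal classes. -/
lemma diag_class (S : Setup P X Y) {c : Set (Ω × Ω)} (hc : c ∈ P) {α : Ω}
    (h : (α, α) ∈ c) : c = diagRel X ∨ c = diagRel Y := by
  rcases S.mem_or_mem α with hx | hy
  · exact Or.inl (S.part.class_unique hc S.dX h ⟨rfl, hx⟩)
  · exact Or.inr (S.part.class_unique hc S.dY h ⟨rfl, hy⟩)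

lemma offdiag (S : Setup P X Y) {c : Set (Ω × Ω)} (hc : c ∈ P)
    (hX : c ≠ diagRel X) (hY : c ≠ diagRel Y) {α β : Ω} (h : (α, β) ∈ c) : α ≠ β := by
  rintro rfl
  rcases S.diag_class hc h with h' | h'
  · exact hX h'
  · exact hY h'

/-- Block trichotomy for classes. -/
lemma blocks (S : Setup P X Y) {c : Set (Ω × Ω)} (hc : c ∈ P) :
    c ⊆ X ×ˢ X ∨ c ⊆ Y ×ˢ Y ∨ c ⊆ (X ×ˢ Y ∪ Y ×ˢ X) := by
  obtain ⟨⟨a₀, b₀⟩, hp₀⟩ := S.part.1 c hc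
  have key : ∀ a b : Ω, (a, b) ∈ c →
      ((if a ∈ X then 1 else 0) + (if b ∈ X then 1 else 0) =
        (if a₀ ∈ X then 1 else 0) + ((if b₀ ∈ X then 1 else 0) : ℕ)) ∧
      ((if a ∈ Y then 1 else 0) + (if b ∈ Y then 1 else 0) =
        (if a₀ ∈ Y then 1 else 0) + ((if b₀ ∈ Y then 1 else 0) : ℕ)) :=
    fun a b h => ⟨S.chi hc S.dX h hp₀, S.chi hc S.dY h hp₀⟩
  rcases S.mem_or_mem a₀ with ha₀ | ha₀ <;> rcases S.mem_or_mem b₀ with hb₀ | hb₀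
  · left
    rintro ⟨a, b⟩ h
    have h1 := (key a b h).1
    rw [if_pos ha₀, if_pos hb₀] at h1
    constructor <;> by_contra hn <;> rw [if_neg hn] at h1 <;> split_ifs at h1 <;> omega
  · right; right
    rintro ⟨a, b⟩ h
    have h1 := (key a b h).1
    have h2 := (key a b h).2
    rw [if_pos ha₀, if_neg (fun hh => S.not_both hh hb₀)] at h1
    rw [if_pos hb₀, if_neg (fun hh => S.not_both ha₀ hh)] at h2
    rcases S.mem_or_mem a with ha | ha
    · left
      refine ⟨ha, ?_⟩
      rw [if_pos ha] at h1
      by_contra hb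
      rw [if_neg hb] at h2
      have hbx : b ∈ X := Setup.mem_Y_of_not_X S.swap hb
      rw [if_pos hbx] at h1
      split_ifs at h2 <;> omega
    · right
      refine ⟨ha, ?_⟩
      rw [if_pos ha] at h2
      by_contra hb
      rw [if_neg hb] at h1
      have hby : b ∈ Y := S.mem_Y_of_not_X hb
      rw [if_pos hby] at h2
      split_ifs at h1 <;> omega
  · right; right
    rintro ⟨a, b⟩ h
    have h1 := (key a b h).1
    have h2 := (key a b h).2
    rw [if_neg (fun hh => S.not_both hh ha₀), if_pos hb₀] at h1
    rw [if_pos ha₀, if_neg (fun hh => S.not_both hb₀ hh)] at h2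
    rcases S.mem_or_mem a with ha | ha
    · left
      refine ⟨ha, ?_⟩
      rw [if_pos ha] at h1
      by_contra hb
      rw [if_neg hb] at h2
      have hbx : b ∈ X := Setup.mem_Y_of_not_X S.swap hb
      rw [if_pos hbx] at h1
      split_ifs at h2 <;> omega
    · right
      refine ⟨ha, ?_⟩
      rw [if_pos ha] at h2
      by_contra hb
      rw [if_neg hb] at h1
      have hby : b ∈ Y := S.mem_Y_of_not_X hb
      rw [if_pos hby] at h2
      split_ifs at h1 <;> omega
  · right; left
    rintro ⟨a, b⟩ h
    have h2 := (key a b h).2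
    rw [if_pos ha₀, if_pos hb₀] at h2
    constructor <;> by_contra hn <;> rw [if_neg hn] at h2 <;> split_ifs at h2 <;> omega

end Setup

end Lemmas2
section Lemmas3

variable [Finite Ω] {P : Set (Set (Ω × Ω))} {X Y : Set Ω}

namespace Setup

lemma notMem_cross_XX (S : Setup P X Y) {a b : Ω} (ha : a ∈ X) (hb : b ∈ X) :
    (a, b) ∉ X ×ˢ Y ∪ Y ×ˢ X := by
  rintro (⟨-, h2⟩ | ⟨h1, -⟩)
  · exact S.not_both hb h2
  · exact S.not_both ha h1

lemma class_in_XX (S : Setup P X Y) {a b : Ω} (ha : a ∈ X) (hb : b ∈ X)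
    {c : Set (Ω × Ω)} (hc : c ∈ P) (h : (a, b) ∈ c) : c ⊆ X ×ˢ X := by
  rcases S.blocks hc with hB | hB | hB
  · exact hB
  · exact absurd (hB h).1 (fun hh => S.not_both ha hh)
  · exact absurd (hB h) (S.notMem_cross_XX ha hb)

lemma class_in_cross (S : Setup P X Y) {a b : Ω} (ha : a ∈ X) (hb : b ∈ Y)
    {c : Set (Ω × Ω)} (hc : c ∈ P) (h : (a, b) ∈ c) : c ⊆ X ×ˢ Y ∪ Y ×ˢ X := by
  rcases S.blocks hc with hB | hB | hB
  · exact absurd (hB h).2 (fun hh => S.not_both hh hb)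
  · exact absurd (hB h).1 (fun hh => S.not_both ha hh)
  · exact hB

lemma snd_mem_Y_of_cross (S : Setup P X Y) {a b : Ω} (ha : a ∈ X)
    (h : (a, b) ∈ X ×ˢ Y ∪ Y ×ˢ X) : b ∈ Y := by
  rcases h with ⟨-, h2⟩ | ⟨h1, -⟩
  · exact h2
  · exact absurd h1 (fun hh => S.not_both ha hh)

/-- A nonempty cross class has positive degree at every point of `X`. -/
lemma cross_deg (S : Setup P X Y) {c : Set (Ω × Ω)} (hc : c ∈ P)
    (hcb : c ⊆ X ×ˢ Y ∪ Y ×ˢ X) {a : Ω} (ha : a ∈ X) : (outSet c a).Nonempty := by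
  obtain ⟨⟨u, v⟩, huv⟩ := S.part.1 c hc
  have key : ∃ w ∈ X, (outSet c w).Nonempty := by
    rcases hcb huv with ⟨h1, h2⟩ | ⟨h1, h2⟩
    · exact ⟨u, h1, v, huv⟩
    · refine ⟨v, h2, u, ?_⟩
      rw [mem_outSet, ← S.symm c hc]
      exact huv
  obtain ⟨w, hw, hne⟩ := key
  have hd := S.deg_const hc S.dX ha hw
  have h0 : (outSet c w).ncard ≠ 0 := by
    intro h
    rw [Set.ncard_eq_zero (Set.toFinite _)] at h
    rw [h] at hne
    exact Set.not_nonempty_empty hne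
  exact Set.nonempty_of_ncard_ne_zero (by omega)

/-- The full cross block is a class. -/
lemma crossMem (S : Setup P X Y) : (X ×ˢ Y ∪ Y ×ˢ X) ∈ P := by
  obtain ⟨x₁, hx₁⟩ := S.neX
  obtain ⟨x₂, hx₂⟩ := S.neY
  obtain ⟨c, hc, hxc⟩ := S.part.exists_mem (x₁, x₂)
  have hcb : c ⊆ X ×ˢ Y ∪ Y ×ˢ X := S.class_in_cross hx₁ hx₂ hc hxc
  have hfull : (X ×ˢ Y ∪ Y ×ˢ X) ⊆ c := by
    rintro ⟨a, b⟩ hab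
    -- wlog `(a,b) ∈ X ×ˢ Y` using symmetry of `c`
    obtain ⟨c', hc', habc⟩ := S.part.exists_mem (a, b)
    have hcb' : c' ⊆ X ×ˢ Y ∪ Y ×ˢ X := by
      rcases hab with ⟨h1, h2⟩ | ⟨h1, h2⟩
      · exact S.class_in_cross h1 h2 hc' habc
      · have := Setup.class_in_cross S.swap h1 h2 hc' habc
        rw [Set.union_comm] at this
        exact this
    by_cases hcc : c' = c
    · rwa [hcc] at habc
    -- now derive a contradiction: six distinct classes
    exfalso
    obtain ⟨u, hu⟩ := S.cross_deg hc hcb hx₁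
    obtain ⟨v, hv⟩ := S.cross_deg hc' hcb' hx₁
    rw [mem_outSet] at hu hv
    have huY : u ∈ Y := S.snd_mem_Y_of_cross hx₁ (hcb hu)
    have hvY : v ∈ Y := S.snd_mem_Y_of_cross hx₁ (hcb' hv)
    have huv : u ≠ v := by
      rintro rfl
      exact hcc (S.part.class_unique hc' hc hv hu)
    obtain ⟨u', hu'⟩ := Setup.cross_deg S.swap hc
      (by rw [Set.union_comm]; exact hcb) hx₂
    obtain ⟨v', hv'⟩ := Setup.cross_deg S.swap hc'
      (by rw [Set.union_comm]; exact hcb') hx₂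
    rw [mem_outSet] at hu' hv'
    have hu'X : u' ∈ X := Setup.snd_mem_Y_of_cross S.swap hx₂ (by
      have := hcb hu'; rw [Set.union_comm] at this; exact this)
    have hv'X : v' ∈ X := Setup.snd_mem_Y_of_cross S.swap hx₂ (by
      have := hcb' hv'; rw [Set.union_comm] at this; exact this)
    have hu'v' : u' ≠ v' := by
      rintro rfl
      exact hcc (S.part.class_unique hc' hc hv' hu')
    -- the two within classes
    obtain ⟨w₂, hw₂, hw₂m⟩ := S.part.exists_mem (u, v)
    have hw₂b : w₂ ⊆ Y ×ˢ Y := by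
      have := Setup.class_in_XX S.swap huY hvY hw₂ hw₂m
      exact this
    obtain ⟨w₁, hw₁, hw₁m⟩ := S.part.exists_mem (u', v')
    have hw₁b : w₁ ⊆ X ×ˢ X := S.class_in_XX hu'X hv'X hw₁ hw₁m
    -- pairwise distinctness
    have hdXY : diagRel X ≠ diagRel Y :=
      ne_of_mem_notMem (⟨rfl, hx₁⟩ : (x₁, x₁) ∈ diagRel X)
        (fun hh => S.not_both hx₁ hh.2)
    have hdXw₁ : diagRel X ≠ w₁ := fun he =>
      hu'v' (((he ▸ hw₁m) : (u', v') ∈ diagRel X).1)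
    have hdXw₂ : diagRel X ≠ w₂ := fun he =>
      S.not_both hx₁ ((hw₂b ((he.symm ▸ (⟨rfl, hx₁⟩ : (x₁, x₁) ∈ diagRel X)) : (x₁, x₁) ∈ w₂)).1)
    have hdXc : diagRel X ≠ c := fun he =>
      S.not_both hx₁ (by
        have hm : (x₁, u) ∈ diagRel X := he.symm ▸ hu
        have h1 : x₁ = u := hm.1
        rw [h1]; exact huY)
    have hdXc' : diagRel X ≠ c' := fun he =>
      S.not_both hx₁ (by
        have hm : (x₁, v) ∈ diagRel X := he.symm ▸ hv
        have h1 : x₁ = v := hm.1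
        rw [h1]; exact hvY)
    have hdYw₁ : diagRel Y ≠ w₁ := fun he =>
      hu'v' (((he ▸ hw₁m) : (u', v') ∈ diagRel Y).1)
    have hdYw₂ : diagRel Y ≠ w₂ := fun he =>
      huv (((he ▸ hw₂m) : (u, v) ∈ diagRel Y).1)
    have hx₁u : x₁ ≠ u := fun hh => S.not_both hx₁ (hh ▸ huY)
    have hdYc : diagRel Y ≠ c := fun he =>
      S.not_both hx₁ (((he.symm ▸ hu) : (x₁, u) ∈ diagRel Y).2)
    have hdYc' : diagRel Y ≠ c' := fun he =>
      S.not_both hx₁ (((he.symm ▸ hv) : (x₁, v) ∈ diagRel Y).2)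
    have hw₁w₂ : w₁ ≠ w₂ := fun he =>
      S.not_both hu'X ((hw₂b (he ▸ hw₁m)).1)
    have hw₁c : w₁ ≠ c := fun he =>
      S.notMem_cross_XX hu'X hv'X (hcb (he ▸ hw₁m))
    have hw₁c' : w₁ ≠ c' := fun he =>
      S.notMem_cross_XX hu'X hv'X (hcb' (he ▸ hw₁m))
    have hw₂c : w₂ ≠ c := fun he => by
      have := hcb (he ▸ hw₂m)
      rcases this with ⟨h1, -⟩ | ⟨-, h2⟩
      · exact S.not_both h1 huY
      · exact S.not_both h2 hvY
    have hw₂c' : w₂ ≠ c' := fun he => by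
      have := hcb' (he ▸ hw₂m)
      rcases this with ⟨h1, -⟩ | ⟨-, h2⟩
      · exact S.not_both h1 huY
      · exact S.not_both h2 hvY
    have hcc' : c ≠ c' := fun he => hcc he.symm
    have h6 := six_distinct_ncard S.dX S.dY hw₁ hw₂ hc hc'
      hdXY hdXw₁ hdXw₂ hdXc hdXc' hdYw₁ hdYw₂ hdYc hdYc' hw₁w₂ hw₁c hw₁c' hw₂c hw₂c' hcc'
    have := S.rank5
    omega
  have : c = X ×ˢ Y ∪ Y ×ˢ X := Set.Subset.antisymm hcb hfull
  rwa [← this]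

end Setup

end Lemmas3
section Lemmas4

set_option linter.unusedSectionVars false

variable [Finite Ω] {P : Set (Set (Ω × Ω))} {X Y : Set Ω}

namespace Setup

lemma mem_symm (S : Setup P X Y) {c : Set (Ω × Ω)} (hc : c ∈ P) {α β : Ω} :
    (α, β) ∈ c ↔ (β, α) ∈ c := by
  conv_rhs => rw [← S.symm c hc]
  exact (mem_transposeRel (c := c)).symm

lemma cross_unique (S : Setup P X Y) {c : Set (Ω × Ω)} (hc : c ∈ P)
    (hcb : c ⊆ X ×ˢ Y ∪ Y ×ˢ X) : c = X ×ˢ Y ∪ Y ×ˢ X := by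
  obtain ⟨p, hp⟩ := S.part.1 c hc
  exact S.part.class_unique hc S.crossMem hp (hcb hp)

lemma fiber_unique (S : Setup P X Y) {Δ : Set Ω} (hne : Δ.Nonempty)
    (hΔ : diagRel Δ ∈ P) : Δ = X ∨ Δ = Y := by
  obtain ⟨α, hα⟩ := hne
  have hm : (α, α) ∈ diagRel Δ := ⟨rfl, hα⟩
  rcases S.diag_class hΔ hm with h | h
  · left
    ext x
    constructor
    · intro hx
      exact ((h ▸ (⟨rfl, hx⟩ : (x, x) ∈ diagRel Δ)) : (x, x) ∈ diagRel X).2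
    · intro hx
      exact ((h ▸ (⟨rfl, hx⟩ : (x, x) ∈ diagRel X)) : (x, x) ∈ diagRel Δ).2
  · right
    ext x
    constructor
    · intro hx
      exact ((h ▸ (⟨rfl, hx⟩ : (x, x) ∈ diagRel Δ)) : (x, x) ∈ diagRel Y).2
    · intro hx
      exact ((h ▸ (⟨rfl, hx⟩ : (x, x) ∈ diagRel Y)) : (x, x) ∈ diagRel Δ).2

lemma within_ne_diagY (S : Setup P X Y) {g : Set (Ω × Ω)} (hg : g ∈ P)
    (hgX : g ⊆ X ×ˢ X) : g ≠ diagRel Y := by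
  obtain ⟨⟨a, b⟩, hab⟩ := S.part.1 g hg
  intro he
  exact S.not_both (hgX hab).1 ((he ▸ hab : (a, b) ∈ diagRel Y)).2

lemma within_ne_cross (S : Setup P X Y) {g : Set (Ω × Ω)} (hg : g ∈ P)
    (hgX : g ⊆ X ×ˢ X) : g ≠ (X ×ˢ Y ∪ Y ×ˢ X) := by
  obtain ⟨⟨a, b⟩, hab⟩ := S.part.1 g hg
  intro he
  exact S.notMem_cross_XX (hgX hab).1 (hgX hab).2 (he ▸ hab)

/-- There cannot be three distinct non-diagonal classes inside `X × X`. -/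
lemma within_two (S : Setup P X Y) {g h k : Set (Ω × Ω)}
    (hg : g ∈ P) (hh : h ∈ P) (hk : k ∈ P)
    (hgX : g ⊆ X ×ˢ X) (hhX : h ⊆ X ×ˢ X) (hkX : k ⊆ X ×ˢ X)
    (hgd : g ≠ diagRel X) (hhd : h ≠ diagRel X) (hkd : k ≠ diagRel X)
    (hgh : g ≠ h) (hgk : g ≠ k) (hhk : h ≠ k) : False := by
  obtain ⟨x₁, hx₁⟩ := S.neX
  obtain ⟨x₂, hx₂⟩ := S.neY
  have hdXY : diagRel X ≠ diagRel Y :=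
    ne_of_mem_notMem (⟨rfl, hx₁⟩ : (x₁, x₁) ∈ diagRel X) (fun hm => S.not_both hx₁ hm.2)
  have hdXc : diagRel X ≠ (X ×ˢ Y ∪ Y ×ˢ X) :=
    ne_of_mem_notMem (⟨rfl, hx₁⟩ : (x₁, x₁) ∈ diagRel X) (S.notMem_cross_XX hx₁ hx₁)
  have hdYc : diagRel Y ≠ (X ×ˢ Y ∪ Y ×ˢ X) :=
    ne_of_mem_notMem (⟨rfl, hx₂⟩ : (x₂, x₂) ∈ diagRel Y)
      (Setup.notMem_cross_XX S.swap hx₂ hx₂ ∘ (by rw [Set.union_comm]; exact id))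
  have h6 := six_distinct_ncard S.dX S.dY S.crossMem hg hh hk
    hdXY hdXc (Ne.symm hgd) (Ne.symm hhd) (Ne.symm hkd)
    hdYc (Ne.symm (S.within_ne_diagY hg hgX)) (Ne.symm (S.within_ne_diagY hh hhX))
    (Ne.symm (S.within_ne_diagY hk hkX))
    (Ne.symm (S.within_ne_cross hg hgX)) (Ne.symm (S.within_ne_cross hh hhX))
    (Ne.symm (S.within_ne_cross hk hkX)) hgh hgk hhk
  have := S.rank5
  omega

lemma cnum_diagX_right (S : Setup P X Y) {c : Set (Ω × Ω)} {α β : Ω} (hβ : β ∈ X) :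
    cnum c (diagRel X) α β = if (α, β) ∈ c then 1 else 0 := by
  unfold cnum
  rw [transposeRel_diagRel, outSet_diagRel, if_pos hβ]
  split_ifs with h
  · rw [Set.inter_eq_self_of_subset_right (by simpa [mem_outSet] using h)]
    exact Set.ncard_singleton β
  · have : outSet c α ∩ {β} = ∅ := by
      ext γ
      simp only [Set.mem_inter_iff, Set.mem_singleton_iff, Set.mem_empty_iff_false, iff_false,
        not_and]
      rintro hγ rfl
      exact h hγ
    rw [this, Set.ncard_empty]

lemma cnum_diagX_left (S : Setup P X Y) {c : Set (Ω × Ω)} (hc : c ∈ P) {α β : Ω} (hα : α ∈ X) :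
    cnum (diagRel X) c α β = if (α, β) ∈ c then 1 else 0 := by
  unfold cnum
  rw [S.symm c hc, outSet_diagRel, if_pos hα]
  split_ifs with h
  · rw [Set.inter_eq_self_of_subset_left
      (by simpa [mem_outSet] using (S.mem_symm hc).mp h)]
    exact Set.ncard_singleton α
  · have : ({α} : Set Ω) ∩ outSet c β = ∅ := by
      ext γ
      simp only [Set.mem_inter_iff, Set.mem_singleton_iff, Set.mem_empty_iff_false, iff_false,
        not_and]
      rintro rfl hγ
      exact h ((S.mem_symm hc).mpr hγ)
    rw [this, Set.ncard_empty]

lemma mem_iff_class_eq (hP : IsPartition P) {c f : Set (Ω × Ω)} (hc : c ∈ P) (hf : f ∈ P)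
    {p : Ω × Ω} (hp : p ∈ f) : p ∈ c ↔ f = c := by
  constructor
  · intro h
    exact hP.class_unique hf hc hp h
  · rintro rfl
    exact hp

lemma cnum_self_const (S : Setup P X Y) {c f : Set (Ω × Ω)} (hc : c ∈ P) (hf : f ∈ P)
    {p q : Ω × Ω} (hp : p ∈ f) (hq : q ∈ f) :
    cnum c c p.1 p.2 = cnum c c q.1 q.2 := by
  have := S.jord c hc c hc f hf p hp q hq
  unfold jnum at this
  omega

/-- Decomposition of the neighbourhood: for classes `c ⊆ X ×ˢ X` with at most two
off-diagonal classes inside `X ×ˢ X`. -/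
lemma within_decomp (S : Setup P X Y) {c d : Set (Ω × Ω)} (hc : c ∈ P) (hd : d ∈ P)
    (hcX : c ⊆ X ×ˢ X) (hdX : d ⊆ X ×ˢ X) (hcd : c ≠ d)
    (hcdiag : c ≠ diagRel X) (hddiag : d ≠ diagRel X)
    {α β : Ω} (hα : α ∈ X) (hβ : β ∈ X) :
    cnum c (diagRel X) α β + cnum c c α β + cnum c d α β = (outSet c α).ncard := by
  have hsymc := S.symm c hc
  have hsymd := S.symm d hd
  set A := outSet c α with hA
  have hAX : A ⊆ X := fun γ hγ => (hcX hγ).2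
  have cover : A ⊆ outSet (diagRel X) β ∪ outSet c β ∪ outSet d β := by
    intro γ hγ
    obtain ⟨k, hk, hkm⟩ := S.part.exists_mem (β, γ)
    have hkX : k ⊆ X ×ˢ X := S.class_in_XX hβ (hAX hγ) hk hkm
    by_cases hkdiag : k = diagRel X
    · left; left
      rw [mem_outSet, ← hkdiag]
      exact hkm
    · by_cases hkc : k = c
      · left; right
        rw [mem_outSet, ← hkc]
        exact hkm
      · by_cases hkd : k = d
        · right
          rw [mem_outSet, ← hkd]
          exact hkm
        · exact absurd (S.within_two hc hd hk hcX hdX hkX hcdiag hddiag hkdiag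
            hcd (Ne.symm hkc) (Ne.symm hkd)) id
  have hAeq : A = (A ∩ outSet (diagRel X) β) ∪ (A ∩ outSet c β) ∪ (A ∩ outSet d β) := by
    ext γ
    constructor
    · intro hγ
      rcases cover hγ with (h | h) | h
      · exact Or.inl (Or.inl ⟨hγ, h⟩)
      · exact Or.inl (Or.inr ⟨hγ, h⟩)
      · exact Or.inr ⟨hγ, h⟩
    · rintro ((⟨h, -⟩ | ⟨h, -⟩) | ⟨h, -⟩) <;> exact h
  have hdisj1 : Disjoint (A ∩ outSet (diagRel X) β) (A ∩ outSet c β) := by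
    rw [Set.disjoint_left]
    rintro γ ⟨-, h1⟩ ⟨-, h2⟩
    rw [mem_outSet] at h1 h2
    have : β = γ := h1.1
    subst this
    exact S.offdiag hc hcdiag (S.within_ne_diagY hc hcX) h2 rfl
  have hdisj2 : Disjoint ((A ∩ outSet (diagRel X) β) ∪ (A ∩ outSet c β)) (A ∩ outSet d β) := by
    rw [Set.disjoint_left]
    rintro γ (⟨-, h1⟩ | ⟨-, h1⟩) ⟨-, h2⟩
    · rw [mem_outSet] at h1 h2
      have : β = γ := h1.1
      subst this
      exact S.offdiag hd hddiag (S.within_ne_diagY hd hdX) h2 rfl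
    · rw [mem_outSet] at h1 h2
      exact absurd (S.part.class_unique hc hd h1 h2) hcd
  have hcard : A.ncard = (A ∩ outSet (diagRel X) β).ncard + (A ∩ outSet c β).ncard
      + (A ∩ outSet d β).ncard := by
    conv_lhs => rw [hAeq]
    rw [Set.ncard_union_eq hdisj2 (Set.toFinite _) (Set.toFinite _),
      Set.ncard_union_eq hdisj1 (Set.toFinite _) (Set.toFinite _)]
  have e1 : cnum c (diagRel X) α β = (A ∩ outSet (diagRel X) β).ncard := by
    unfold cnum
    rw [transposeRel_diagRel]
  have e2 : cnum c c α β = (A ∩ outSet c β).ncard := by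
    unfold cnum
    rw [hsymc]
  have e3 : cnum c d α β = (A ∩ outSet d β).ncard := by
    unfold cnum
    rw [hsymd]
  rw [e1, e2, e3]
  omega

/-- Coherence inside a fiber. -/
lemma within_coherent (S : Setup P X Y) :
    IsCoherentCond {c : Set (Ω × Ω) | c ∈ P ∧ c ⊆ X ×ˢ X} := by
  rintro c ⟨hc, hcX⟩ d ⟨hd, hdX⟩ f ⟨hf, hfX⟩ p hp q hq
  obtain ⟨α, β⟩ := p
  obtain ⟨α', β'⟩ := q
  have hα : α ∈ X := (hfX hp).1
  have hβ : β ∈ X := (hfX hp).2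
  have hα' : α' ∈ X := (hfX hq).1
  have hβ' : β' ∈ X := (hfX hq).2
  show cnum c d α β = cnum c d α' β'
  have hind : ∀ e : Set (Ω × Ω), e ∈ P →
      ((if (α, β) ∈ e then 1 else 0) : ℕ) = if (α', β') ∈ e then 1 else 0 := by
    intro e he
    rw [mem_iff_class_eq S.part he hf hp, mem_iff_class_eq S.part he hf hq]
  by_cases hddiag : d = diagRel X
  · subst hddiag
    rw [S.cnum_diagX_right hβ, S.cnum_diagX_right hβ']
    exact hind c hc
  by_cases hcdiag : c = diagRel X
  · subst hcdiag
    rw [S.cnum_diagX_left hd hα, S.cnum_diagX_left hd hα']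
    exact hind d hd
  by_cases hcd : c = d
  · subst hcd
    exact S.cnum_self_const hc hf hp hq
  have h1 := S.within_decomp hc hd hcX hdX hcd hcdiag hddiag hα hβ
  have h2 := S.within_decomp hc hd hcX hdX hcd hcdiag hddiag hα' hβ'
  have h3 : cnum c (diagRel X) α β = cnum c (diagRel X) α' β' := by
    rw [S.cnum_diagX_right hβ, S.cnum_diagX_right hβ']
    exact hind c hc
  have h4 : cnum c c α β = cnum c c α' β' := S.cnum_self_const hc hf hp hq
  have h5 : (outSet c α).ncard = (outSet c α').ncard := S.deg_const hc S.dX hα hα'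
  omega

end Setup

end Lemmas4
section Lemmas5

set_option linter.unusedSectionVars false

/-- The underlying coherent configuration. -/
def Dset (P : Set (Set (Ω × Ω))) (X Y : Set Ω) : Set (Set (Ω × Ω)) :=
  {c | c ∈ P ∧ c ⊆ X ×ˢ X} ∪ {c | c ∈ P ∧ c ⊆ Y ×ˢ Y} ∪ {X ×ˢ Y, Y ×ˢ X}

variable {P : Set (Set (Ω × Ω))} {X Y : Set Ω}

lemma mem_Dset {c : Set (Ω × Ω)} :
    c ∈ Dset P X Y ↔ (c ∈ P ∧ c ⊆ X ×ˢ X) ∨ (c ∈ P ∧ c ⊆ Y ×ˢ Y) ∨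
      c = X ×ˢ Y ∨ c = Y ×ˢ X := by
  simp only [Dset, Set.mem_union, Set.mem_setOf_eq, Set.mem_insert_iff, Set.mem_singleton_iff]
  tauto

lemma Dset_comm : Dset P X Y = Dset P Y X := by
  unfold Dset
  rw [Set.union_comm {c | c ∈ P ∧ c ⊆ X ×ˢ X} _, Set.pair_comm]

lemma transposeRel_prod (A B : Set Ω) : transposeRel (A ×ˢ B) = B ×ˢ A := by
  ext ⟨a, b⟩
  simp only [transposeRel, Set.mem_setOf_eq, Set.mem_prod]
  tauto

lemma outSet_prod_mem {A B : Set Ω} {α : Ω} (h : α ∈ A) : outSet (A ×ˢ B) α = B := by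
  ext γ
  simp only [mem_outSet, Set.mem_prod]
  tauto

lemma outSet_prod_notMem {A B : Set Ω} {α : Ω} (h : α ∉ A) : outSet (A ×ˢ B) α = ∅ := by
  ext γ
  simp only [mem_outSet, Set.mem_prod, Set.mem_empty_iff_false, iff_false]
  tauto

lemma outSet_nil {c : Set (Ω × Ω)} {R C : Set Ω} (h : c ⊆ R ×ˢ C) {α : Ω} (hα : α ∉ R) :
    outSet c α = ∅ := by
  ext γ
  simp only [mem_outSet, Set.mem_empty_iff_false, iff_false]
  exact fun hm => hα (h hm).1

lemma outSet_col {c : Set (Ω × Ω)} {R C : Set Ω} (h : c ⊆ R ×ˢ C) {α : Ω} :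
    outSet c α ⊆ C := fun γ hγ => (h hγ).2

lemma cnum_zero_left {c d : Set (Ω × Ω)} {α β : Ω} (h : outSet c α = ∅) :
    cnum c d α β = 0 := by
  unfold cnum
  rw [h, Set.empty_inter, Set.ncard_empty]

lemma cnum_zero_right {c d : Set (Ω × Ω)} {α β : Ω} (h : outSet (transposeRel d) β = ∅) :
    cnum c d α β = 0 := by
  unfold cnum
  rw [h, Set.inter_empty, Set.ncard_empty]

lemma cnum_zero_disj {c d : Set (Ω × Ω)} {α β : Ω} {s t : Set Ω}
    (h1 : outSet c α ⊆ s) (h2 : outSet (transposeRel d) β ⊆ t) (hst : s ∩ t = ∅) :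
    cnum c d α β = 0 := by
  unfold cnum
  have : outSet c α ∩ outSet (transposeRel d) β = ∅ := by
    apply Set.eq_empty_of_subset_empty
    rw [← hst]
    exact Set.inter_subset_inter h1 h2
  rw [this, Set.ncard_empty]

namespace Setup

variable [Finite Ω]

/-- Case: both classes within `X`. -/
lemma DH1 (S : Setup P X Y) {c d : Set (Ω × Ω)} (hc : c ∈ P) (hcX : c ⊆ X ×ˢ X)
    (hd : d ∈ P) (hdX : d ⊆ X ×ˢ X) :
    ∀ f ∈ Dset P X Y, ∀ p ∈ f, ∀ q ∈ f, cnum c d p.1 p.2 = cnum c d q.1 q.2 := by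
  intro f hf p hp q hq
  rcases mem_Dset.mp hf with ⟨hfP, hfX⟩ | ⟨hfP, hfY⟩ | rfl | rfl
  · exact S.within_coherent c ⟨hc, hcX⟩ d ⟨hd, hdX⟩ f ⟨hfP, hfX⟩ p hp q hq
  · have e1 : outSet c p.1 = ∅ := outSet_nil hcX (fun hh => S.not_both hh (hfY hp).1)
    have e2 : outSet c q.1 = ∅ := outSet_nil hcX (fun hh => S.not_both hh (hfY hq).1)
    rw [cnum_zero_left e1, cnum_zero_left e2]
  · have e1 : outSet (transposeRel d) p.2 = ∅ := by
      rw [S.symm d hd]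
      exact outSet_nil hdX (fun hh => S.not_both hh hp.2)
    have e2 : outSet (transposeRel d) q.2 = ∅ := by
      rw [S.symm d hd]
      exact outSet_nil hdX (fun hh => S.not_both hh hq.2)
    rw [cnum_zero_right e1, cnum_zero_right e2]
  · have e1 : outSet c p.1 = ∅ := outSet_nil hcX (fun hh => S.not_both hh hp.1)
    have e2 : outSet c q.1 = ∅ := outSet_nil hcX (fun hh => S.not_both hh hq.1)
    rw [cnum_zero_left e1, cnum_zero_left e2]

/-- Case: `c` within `X`, `d` the cross block `X ×ˢ Y`. -/
lemma DH3 (S : Setup P X Y) {c : Set (Ω × Ω)} (hc : c ∈ P) (hcX : c ⊆ X ×ˢ X) :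
    ∀ f ∈ Dset P X Y, ∀ p ∈ f, ∀ q ∈ f,
      cnum c (X ×ˢ Y) p.1 p.2 = cnum c (X ×ˢ Y) q.1 q.2 := by
  have key : ∀ α β : Ω, β ∈ Y → cnum c (X ×ˢ Y) α β = (outSet c α).ncard := by
    intro α β hβ
    unfold cnum
    rw [transposeRel_prod, outSet_prod_mem hβ,
      Set.inter_eq_self_of_subset_left (outSet_col hcX)]
  intro f hf p hp q hq
  rcases mem_Dset.mp hf with ⟨hfP, hfX⟩ | ⟨hfP, hfY⟩ | rfl | rfl
  · have e1 : outSet (transposeRel (X ×ˢ Y)) p.2 = ∅ := by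
      rw [transposeRel_prod]
      exact outSet_prod_notMem (fun hh => S.not_both (hfX hp).2 hh)
    have e2 : outSet (transposeRel (X ×ˢ Y)) q.2 = ∅ := by
      rw [transposeRel_prod]
      exact outSet_prod_notMem (fun hh => S.not_both (hfX hq).2 hh)
    rw [cnum_zero_right e1, cnum_zero_right e2]
  · have e1 : outSet c p.1 = ∅ := outSet_nil hcX (fun hh => S.not_both hh (hfY hp).1)
    have e2 : outSet c q.1 = ∅ := outSet_nil hcX (fun hh => S.not_both hh (hfY hq).1)
    rw [cnum_zero_left e1, cnum_zero_left e2]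
  · rw [key p.1 p.2 hp.2, key q.1 q.2 hq.2]
    exact S.deg_const hc S.dX hp.1 hq.1
  · have e1 : outSet c p.1 = ∅ := outSet_nil hcX (fun hh => S.not_both hh hp.1)
    have e2 : outSet c q.1 = ∅ := outSet_nil hcX (fun hh => S.not_both hh hq.1)
    rw [cnum_zero_left e1, cnum_zero_left e2]

/-- Case: `c` the cross block `X ×ˢ Y`, `d` within `Y`. -/
lemma DH4 (S : Setup P X Y) {d : Set (Ω × Ω)} (hd : d ∈ P) (hdY : d ⊆ Y ×ˢ Y) :
    ∀ f ∈ Dset P X Y, ∀ p ∈ f, ∀ q ∈ f,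
      cnum (X ×ˢ Y) d p.1 p.2 = cnum (X ×ˢ Y) d q.1 q.2 := by
  have key : ∀ α β : Ω, α ∈ X → cnum (X ×ˢ Y) d α β = (outSet d β).ncard := by
    intro α β hα
    unfold cnum
    rw [outSet_prod_mem hα, S.symm d hd,
      Set.inter_eq_self_of_subset_right (outSet_col hdY)]
  intro f hf p hp q hq
  rcases mem_Dset.mp hf with ⟨hfP, hfX⟩ | ⟨hfP, hfY⟩ | rfl | rfl
  · have e1 : outSet (transposeRel d) p.2 = ∅ := by
      rw [S.symm d hd]
      exact outSet_nil hdY (fun hh => S.not_both (hfX hp).2 hh)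
    have e2 : outSet (transposeRel d) q.2 = ∅ := by
      rw [S.symm d hd]
      exact outSet_nil hdY (fun hh => S.not_both (hfX hq).2 hh)
    rw [cnum_zero_right e1, cnum_zero_right e2]
  · have e1 : outSet (X ×ˢ Y) p.1 = ∅ := outSet_prod_notMem (fun hh => S.not_both hh (hfY hp).1)
    have e2 : outSet (X ×ˢ Y) q.1 = ∅ := outSet_prod_notMem (fun hh => S.not_both hh (hfY hq).1)
    rw [cnum_zero_left e1, cnum_zero_left e2]
  · rw [key p.1 p.2 hp.1, key q.1 q.2 hq.1]
    exact S.deg_const hd S.dY hp.2 hq.2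
  · have e1 : outSet (X ×ˢ Y) p.1 = ∅ := outSet_prod_notMem (fun hh => S.not_both hh hp.1)
    have e2 : outSet (X ×ˢ Y) q.1 = ∅ := outSet_prod_notMem (fun hh => S.not_both hh hq.1)
    rw [cnum_zero_left e1, cnum_zero_left e2]

/-- Case: the two cross blocks. -/
lemma DH5 (S : Setup P X Y) :
    ∀ f ∈ Dset P X Y, ∀ p ∈ f, ∀ q ∈ f,
      cnum (X ×ˢ Y) (Y ×ˢ X) p.1 p.2 = cnum (X ×ˢ Y) (Y ×ˢ X) q.1 q.2 := by
  have key : ∀ α β : Ω, α ∈ X → β ∈ X → cnum (X ×ˢ Y) (Y ×ˢ X) α β = Y.ncard := by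
    intro α β hα hβ
    unfold cnum
    rw [outSet_prod_mem hα, transposeRel_prod, outSet_prod_mem hβ, Set.inter_self]
  intro f hf p hp q hq
  rcases mem_Dset.mp hf with ⟨hfP, hfX⟩ | ⟨hfP, hfY⟩ | rfl | rfl
  · rw [key p.1 p.2 (hfX hp).1 (hfX hp).2, key q.1 q.2 (hfX hq).1 (hfX hq).2]
  · have e1 : outSet (X ×ˢ Y) p.1 = ∅ := outSet_prod_notMem (fun hh => S.not_both hh (hfY hp).1)
    have e2 : outSet (X ×ˢ Y) q.1 = ∅ := outSet_prod_notMem (fun hh => S.not_both hh (hfY hq).1)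
    rw [cnum_zero_left e1, cnum_zero_left e2]
  · have e1 : outSet (transposeRel (Y ×ˢ X)) p.2 = ∅ := by
      rw [transposeRel_prod]
      exact outSet_prod_notMem (fun hh => S.not_both hh hp.2)
    have e2 : outSet (transposeRel (Y ×ˢ X)) q.2 = ∅ := by
      rw [transposeRel_prod]
      exact outSet_prod_notMem (fun hh => S.not_both hh hq.2)
    rw [cnum_zero_right e1, cnum_zero_right e2]
  · have e1 : outSet (X ×ˢ Y) p.1 = ∅ := outSet_prod_notMem (fun hh => S.not_both hh hp.1)
    have e2 : outSet (X ×ˢ Y) q.1 = ∅ := outSet_prod_notMem (fun hh => S.not_both hh hq.1)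
    rw [cnum_zero_left e1, cnum_zero_left e2]

/-- The coherent configuration condition for `Dset`. -/
lemma D_coherent (S : Setup P X Y) : IsCoherentCond (Dset P X Y) := by
  have hXY : X ∩ Y = ∅ := S.disj
  have hYX : Y ∩ X = ∅ := by rw [Set.inter_comm]; exact S.disj
  have hswapD : Dset P X Y = Dset P Y X := Dset_comm
  intro c hcD d hdD f hf p hp q hq
  have zz : ∀ (s t : Set Ω), s ∩ t = ∅ → (∀ γ, outSet c γ ⊆ s) →
      (∀ γ, outSet (transposeRel d) γ ⊆ t) →
      cnum c d p.1 p.2 = cnum c d q.1 q.2 := by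
    intro s t hst h1 h2
    rw [cnum_zero_disj (h1 p.1) (h2 p.2) hst, cnum_zero_disj (h1 q.1) (h2 q.2) hst]
  rcases mem_Dset.mp hcD with ⟨hc, hcX⟩ | ⟨hc, hcY⟩ | rfl | rfl
  · rcases mem_Dset.mp hdD with ⟨hd, hdX⟩ | ⟨hd, hdY⟩ | rfl | rfl
    · exact S.DH1 hc hcX hd hdX f hf p hp q hq
    · refine zz X Y hXY (fun γ => outSet_col hcX) (fun γ => ?_)
      rw [S.symm d hd]; exact outSet_col hdY
    · exact S.DH3 hc hcX f hf p hp q hq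
    · refine zz X Y hXY (fun γ => outSet_col hcX) (fun γ => ?_)
      rw [transposeRel_prod]; exact outSet_col Set.Subset.rfl
  · rcases mem_Dset.mp hdD with ⟨hd, hdX⟩ | ⟨hd, hdY⟩ | rfl | rfl
    · refine zz Y X hYX (fun γ => outSet_col hcY) (fun γ => ?_)
      rw [S.symm d hd]; exact outSet_col hdX
    · exact Setup.DH1 S.swap hc hcY hd hdY f (hswapD ▸ hf) p hp q hq
    · refine zz Y X hYX (fun γ => outSet_col hcY) (fun γ => ?_)
      rw [transposeRel_prod]; exact outSet_col Set.Subset.rfl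
    · exact Setup.DH3 S.swap hc hcY f (hswapD ▸ hf) p hp q hq
  · rcases mem_Dset.mp hdD with ⟨hd, hdX⟩ | ⟨hd, hdY⟩ | rfl | rfl
    · refine zz Y X hYX (fun γ => outSet_col Set.Subset.rfl) (fun γ => ?_)
      rw [S.symm d hd]; exact outSet_col hdX
    · exact S.DH4 hd hdY f hf p hp q hq
    · refine zz Y X hYX (fun γ => outSet_col Set.Subset.rfl) (fun γ => ?_)
      rw [transposeRel_prod]; exact outSet_col Set.Subset.rfl
    · exact S.DH5 f hf p hp q hq
  · rcases mem_Dset.mp hdD with ⟨hd, hdX⟩ | ⟨hd, hdY⟩ | rfl | rfl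
    · exact Setup.DH4 S.swap hd hdX f (hswapD ▸ hf) p hp q hq
    · refine zz X Y hXY (fun γ => outSet_col Set.Subset.rfl) (fun γ => ?_)
      rw [S.symm d hd]; exact outSet_col hdY
    · exact Setup.DH5 S.swap f (hswapD ▸ hf) p hp q hq
    · refine zz X Y hXY (fun γ => outSet_col Set.Subset.rfl) (fun γ => ?_)
      rw [transposeRel_prod]; exact outSet_col Set.Subset.rfl

end Setup

end Lemmas5
section Lemmas6

set_option linter.unusedSectionVars false

variable [Finite Ω] {P : Set (Set (Ω × Ω))} {X Y : Set Ω}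

/-- Three pairwise-disjoint fibers are impossible at rank ≤ 5. -/
lemma three_fibers_false (hP : IsPartition P) (hJ : IsJordanCond P)
    (hsym : ∀ c ∈ P, transposeRel c = c) (hrank : P.ncard ≤ 5)
    {Δ₁ Δ₂ Δ₃ : Set Ω} (h1 : diagRel Δ₁ ∈ P) (h2 : diagRel Δ₂ ∈ P) (h3 : diagRel Δ₃ ∈ P)
    (hn1 : Δ₁.Nonempty) (hn2 : Δ₂.Nonempty) (hn3 : Δ₃.Nonempty)
    (h12 : Δ₁ ∩ Δ₂ = ∅) (h13 : Δ₁ ∩ Δ₃ = ∅) (h23 : Δ₂ ∩ Δ₃ = ∅) : False := by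
  obtain ⟨x₁, hx₁⟩ := hn1
  obtain ⟨x₂, hx₂⟩ := hn2
  obtain ⟨x₃, hx₃⟩ := hn3
  have nb12 : ∀ x, x ∈ Δ₁ → x ∈ Δ₂ → False := fun x ha hb => by
    have : x ∈ Δ₁ ∩ Δ₂ := ⟨ha, hb⟩
    rw [h12] at this; exact this
  have nb13 : ∀ x, x ∈ Δ₁ → x ∈ Δ₃ → False := fun x ha hb => by
    have : x ∈ Δ₁ ∩ Δ₃ := ⟨ha, hb⟩
    rw [h13] at this; exact this
  have nb23 : ∀ x, x ∈ Δ₂ → x ∈ Δ₃ → False := fun x ha hb => by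
    have : x ∈ Δ₂ ∩ Δ₃ := ⟨ha, hb⟩
    rw [h23] at this; exact this
  obtain ⟨c₁₂, hc₁₂, hm₁₂⟩ := hP.exists_mem (x₁, x₂)
  obtain ⟨c₁₃, hc₁₃, hm₁₃⟩ := hP.exists_mem (x₁, x₃)
  obtain ⟨c₂₃, hc₂₃, hm₂₃⟩ := hP.exists_mem (x₂, x₃)
  -- distinctness of the cross classes
  have d1 : c₁₂ ≠ c₁₃ := by
    rintro rfl
    have := chi' hJ hsym hc₁₂ h2 hm₁₂ hm₁₃
    rw [if_neg (fun hh => nb12 x₁ hx₁ hh), if_pos hx₂,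
      if_neg (fun hh => nb23 x₃ hh hx₃)] at this
    omega
  have d2 : c₁₂ ≠ c₂₃ := by
    rintro rfl
    have := chi' hJ hsym hc₁₂ h1 hm₁₂ hm₂₃
    rw [if_pos hx₁, if_neg (fun hh => nb12 x₂ hh hx₂),
      if_neg (fun hh => nb13 x₃ hh hx₃)] at this
    omega
  have d3 : c₁₃ ≠ c₂₃ := by
    rintro rfl
    have := chi' hJ hsym hc₁₃ h1 hm₁₃ hm₂₃
    rw [if_pos hx₁, if_neg (fun hh => nb13 x₃ hh hx₃),
      if_neg (fun hh => nb12 x₂ hh hx₂)] at this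
    omega
  -- diag vs diag
  have e12 : diagRel Δ₁ ≠ diagRel Δ₂ :=
    ne_of_mem_notMem (⟨rfl, hx₁⟩ : (x₁, x₁) ∈ diagRel Δ₁) (fun hh => nb12 x₁ hx₁ hh.2)
  have e13 : diagRel Δ₁ ≠ diagRel Δ₃ :=
    ne_of_mem_notMem (⟨rfl, hx₁⟩ : (x₁, x₁) ∈ diagRel Δ₁) (fun hh => nb13 x₁ hx₁ hh.2)
  have e23 : diagRel Δ₂ ≠ diagRel Δ₃ :=
    ne_of_mem_notMem (⟨rfl, hx₂⟩ : (x₂, x₂) ∈ diagRel Δ₂) (fun hh => nb23 x₂ hx₂ hh.2)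
  -- diag vs cross
  have ne12 : x₁ ≠ x₂ := fun hh => nb12 x₁ hx₁ (hh ▸ hx₂)
  have ne13 : x₁ ≠ x₃ := fun hh => nb13 x₁ hx₁ (hh ▸ hx₃)
  have ne23 : x₂ ≠ x₃ := fun hh => nb23 x₂ hx₂ (hh ▸ hx₃)
  have f112 : diagRel Δ₁ ≠ c₁₂ := fun he => ne12 (((he ▸ hm₁₂) : (x₁, x₂) ∈ diagRel Δ₁)).1
  have f113 : diagRel Δ₁ ≠ c₁₃ := fun he => ne13 (((he ▸ hm₁₃) : (x₁, x₃) ∈ diagRel Δ₁)).1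
  have f123 : diagRel Δ₁ ≠ c₂₃ := fun he => ne23 (((he ▸ hm₂₃) : (x₂, x₃) ∈ diagRel Δ₁)).1
  have f212 : diagRel Δ₂ ≠ c₁₂ := fun he => ne12 (((he ▸ hm₁₂) : (x₁, x₂) ∈ diagRel Δ₂)).1
  have f213 : diagRel Δ₂ ≠ c₁₃ := fun he => ne13 (((he ▸ hm₁₃) : (x₁, x₃) ∈ diagRel Δ₂)).1
  have f223 : diagRel Δ₂ ≠ c₂₃ := fun he => ne23 (((he ▸ hm₂₃) : (x₂, x₃) ∈ diagRel Δ₂)).1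
  have f312 : diagRel Δ₃ ≠ c₁₂ := fun he => ne12 (((he ▸ hm₁₂) : (x₁, x₂) ∈ diagRel Δ₃)).1
  have f313 : diagRel Δ₃ ≠ c₁₃ := fun he => ne13 (((he ▸ hm₁₃) : (x₁, x₃) ∈ diagRel Δ₃)).1
  have f323 : diagRel Δ₃ ≠ c₂₃ := fun he => ne23 (((he ▸ hm₂₃) : (x₂, x₃) ∈ diagRel Δ₃)).1
  have h6 := six_distinct_ncard h1 h2 h3 hc₁₂ hc₁₃ hc₂₃
    e12 e13 f112 f113 f123 e23 f212 f213 f223 f312 f313 f323 d1 d2 d3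
  omega

lemma prod_subsets_disjoint {c d : Set (Ω × Ω)} {A B C D : Set Ω}
    (hc : c ⊆ A ×ˢ B) (hd : d ⊆ C ×ˢ D) (h : A ∩ C = ∅ ∨ B ∩ D = ∅) : c ∩ d = ∅ := by
  ext ⟨a, b⟩
  simp only [Set.mem_inter_iff, Set.mem_empty_iff_false, iff_false, not_and]
  intro h1 h2
  rcases h with h | h
  · have : a ∈ A ∩ C := ⟨(hc h1).1, (hd h2).1⟩
    rw [h] at this; exact this
  · have : b ∈ B ∩ D := ⟨(hc h1).2, (hd h2).2⟩
    rw [h] at this; exact this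

namespace Setup

lemma D_partition (S : Setup P X Y) : IsPartition (Dset P X Y) := by
  have hXY := S.disj
  have hYX : Y ∩ X = ∅ := by rw [Set.inter_comm]; exact S.disj
  refine ⟨?_, ?_, ?_⟩
  · intro c hc
    rcases mem_Dset.mp hc with ⟨hc, -⟩ | ⟨hc, -⟩ | rfl | rfl
    · exact S.part.1 c hc
    · exact S.part.1 c hc
    · obtain ⟨x₁, hx₁⟩ := S.neX
      obtain ⟨x₂, hx₂⟩ := S.neY
      exact ⟨(x₁, x₂), hx₁, hx₂⟩
    · obtain ⟨x₁, hx₁⟩ := S.neX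
      obtain ⟨x₂, hx₂⟩ := S.neY
      exact ⟨(x₂, x₁), hx₂, hx₁⟩
  · intro c hc d hd hne
    rcases mem_Dset.mp hc with ⟨hc, hcB⟩ | ⟨hc, hcB⟩ | rfl | rfl <;>
      rcases mem_Dset.mp hd with ⟨hd, hdB⟩ | ⟨hd, hdB⟩ | rfl | rfl
    · exact S.part.2.1 c hc d hd hne
    · exact prod_subsets_disjoint hcB hdB (Or.inl hXY)
    · exact prod_subsets_disjoint hcB Set.Subset.rfl (Or.inr hXY)
    · exact prod_subsets_disjoint hcB Set.Subset.rfl (Or.inl hXY)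
    · exact prod_subsets_disjoint hcB hdB (Or.inl hYX)
    · exact S.part.2.1 c hc d hd hne
    · exact prod_subsets_disjoint hcB Set.Subset.rfl (Or.inl hYX)
    · exact prod_subsets_disjoint hcB Set.Subset.rfl (Or.inr hYX)
    · exact prod_subsets_disjoint Set.Subset.rfl hdB (Or.inr hYX)
    · exact prod_subsets_disjoint Set.Subset.rfl hdB (Or.inl hXY)
    · exact absurd rfl hne
    · exact prod_subsets_disjoint Set.Subset.rfl Set.Subset.rfl (Or.inl hXY)
    · exact prod_subsets_disjoint Set.Subset.rfl hdB (Or.inl hYX)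
    · exact prod_subsets_disjoint Set.Subset.rfl hdB (Or.inr hXY)
    · exact prod_subsets_disjoint Set.Subset.rfl Set.Subset.rfl (Or.inl hYX)
    · exact absurd rfl hne
  · rw [Set.sUnion_eq_univ_iff]
    rintro ⟨a, b⟩
    rcases S.mem_or_mem a with ha | ha <;> rcases S.mem_or_mem b with hb | hb
    · obtain ⟨c, hc, hm⟩ := S.part.exists_mem (a, b)
      exact ⟨c, mem_Dset.mpr (Or.inl ⟨hc, S.class_in_XX ha hb hc hm⟩), hm⟩
    · exact ⟨X ×ˢ Y, mem_Dset.mpr (Or.inr (Or.inr (Or.inl rfl))), ha, hb⟩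
    · exact ⟨Y ×ˢ X, mem_Dset.mpr (Or.inr (Or.inr (Or.inr rfl))), ha, hb⟩
    · obtain ⟨c, hc, hm⟩ := S.part.exists_mem (a, b)
      exact ⟨c, mem_Dset.mpr (Or.inr (Or.inl ⟨hc, Setup.class_in_XX S.swap ha hb hc hm⟩)), hm⟩

lemma D_rainbow (S : Setup P X Y) : IsRainbow (Dset P X Y) := by
  refine ⟨S.D_partition, ?_, ?_⟩
  · intro c hc hne
    rcases mem_Dset.mp hc with ⟨hc, -⟩ | ⟨hc, -⟩ | rfl | rfl
    · exact S.rain.2.1 c hc hne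
    · exact S.rain.2.1 c hc hne
    · obtain ⟨⟨a, b⟩, hm, hd⟩ := hne
      have hab : a = b := hd.1
      subst hab
      exact absurd hm.1 (fun hh => S.not_both hh hm.2)
    · obtain ⟨⟨a, b⟩, hm, hd⟩ := hne
      have hab : a = b := hd.1
      subst hab
      exact absurd hm.2 (fun hh => S.not_both hh hm.1)
  · intro c hc
    rcases mem_Dset.mp hc with ⟨hc', hcB⟩ | ⟨hc', hcB⟩ | rfl | rfl
    · rw [S.symm c hc']; exact hc
    · rw [S.symm c hc']; exact hc
    · rw [transposeRel_prod]
      exact mem_Dset.mpr (Or.inr (Or.inr (Or.inr rfl)))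
    · rw [transposeRel_prod]
      exact mem_Dset.mpr (Or.inr (Or.inr (Or.inl rfl)))

lemma diagRel_subset_prod : diagRel X ⊆ X ×ˢ X := by
  rintro ⟨a, b⟩ ⟨h1, h2⟩
  have : a = b := h1
  subst this
  exact ⟨h2, h2⟩

lemma assocX (S : Setup P X Y) : IsAssocSchemeOn X {c | c ∈ P ∧ c ⊆ X ×ˢ X} := by
  refine ⟨⟨?_, ?_, ?_⟩, ?_, ?_, S.within_coherent⟩
  · rintro c ⟨hc, -⟩
    exact S.part.1 c hc
  · rintro c ⟨hc, -⟩ d ⟨hd, -⟩ hne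
    exact S.part.2.1 c hc d hd hne
  · ext ⟨a, b⟩
    constructor
    · rintro ⟨c, ⟨hc, hcB⟩, hm⟩
      exact hcB hm
    · rintro ⟨ha, hb⟩
      obtain ⟨c, hc, hm⟩ := S.part.exists_mem (a, b)
      exact ⟨c, ⟨hc, S.class_in_XX ha hb hc hm⟩, hm⟩
  · exact ⟨S.dX, diagRel_subset_prod⟩
  · rintro c ⟨hc, hcB⟩
    rw [S.symm c hc]
    exact ⟨hc, hcB⟩

/-- Symmetrizing `Dset` recovers `P`. -/
lemma D_symmize (S : Setup P X Y) :
    {e | ∃ c ∈ Dset P X Y, e = c ∪ transposeRel c} = P := by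
  ext e
  constructor
  · rintro ⟨c, hcD, rfl⟩
    rcases mem_Dset.mp hcD with ⟨hc, -⟩ | ⟨hc, -⟩ | rfl | rfl
    · rw [S.symm c hc, Set.union_self]; exact hc
    · rw [S.symm c hc, Set.union_self]; exact hc
    · rw [transposeRel_prod]; exact S.crossMem
    · rw [transposeRel_prod, Set.union_comm]; exact S.crossMem
  · intro he
    rcases S.blocks he with hB | hB | hB
    · refine ⟨e, mem_Dset.mpr (Or.inl ⟨he, hB⟩), ?_⟩
      rw [S.symm e he, Set.union_self]
    · refine ⟨e, mem_Dset.mpr (Or.inr (Or.inl ⟨he, hB⟩)), ?_⟩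
      rw [S.symm e he, Set.union_self]
    · have := S.cross_unique he hB
      refine ⟨X ×ˢ Y, mem_Dset.mpr (Or.inr (Or.inr (Or.inl rfl))), ?_⟩
      rw [transposeRel_prod, this]

end Setup

end Lemmas6
section Lemmas7

set_option linter.unusedSectionVars false

variable [Fintype Ω] [DecidableEq Ω] {P : Set (Set (Ω × Ω))} {X Y : Set Ω}

lemma adj_apply (c : Set (Ω × Ω)) (a b : Ω) :
    adj ℝ c a b = if (a, b) ∈ c then 1 else 0 := rfl

/-- The coherent algebra: matrices constant on the classes of `D`. -/
def Bmod (D : Set (Set (Ω × Ω))) : Submodule ℝ (Matrix Ω Ω ℝ) where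
  carrier := {x | ∀ f ∈ D, ∀ p ∈ f, ∀ q ∈ f, x p.1 p.2 = x q.1 q.2}
  add_mem' := by
    intro x y hx hy f hf p hp q hq
    simp only [Matrix.add_apply]
    rw [hx f hf p hp q hq, hy f hf p hp q hq]
  zero_mem' := by
    intro f hf p hp q hq
    simp
  smul_mem' := by
    intro r x hx f hf p hp q hq
    simp only [Matrix.smul_apply]
    rw [hx f hf p hp q hq]

lemma mem_Bmod {D : Set (Set (Ω × Ω))} {x : Matrix Ω Ω ℝ} :
    x ∈ Bmod D ↔ ∀ f ∈ D, ∀ p ∈ f, ∀ q ∈ f, x p.1 p.2 = x q.1 q.2 := Iff.rfl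

lemma sum_over_partition {D : Set (Set (Ω × Ω))} (hD : IsPartition D)
    (p : Ω × Ω) (g : Set (Ω × Ω) → ℝ) {c₀ : Set (Ω × Ω)} (hc₀ : c₀ ∈ D) (hm : p ∈ c₀) :
    ∑ c ∈ (Set.toFinite D).toFinset, (if p ∈ c then g c else 0) = g c₀ := by
  rw [Finset.sum_eq_single c₀]
  · rw [if_pos hm]
  · intro b hb hbne
    rw [if_neg]
    intro hpb
    exact hbne (hD.class_unique ((Set.toFinite D).mem_toFinset.mp hb) hc₀ hpb hm)
  · intro h
    exact absurd ((Set.toFinite D).mem_toFinset.mpr hc₀) h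

lemma cnum_filter (c d : Set (Ω × Ω)) (a b : Ω) :
    cnum c d a b = (Finset.univ.filter (fun γ => (a, γ) ∈ c ∧ (γ, b) ∈ d)).card := by
  unfold cnum
  rw [← Set.ncard_coe_finset]
  congr 1
  ext γ
  simp only [Set.mem_inter_iff, mem_outSet, mem_transposeRel, Finset.coe_filter,
    Finset.mem_univ, true_and, Set.mem_setOf_eq]

namespace Setup

lemma D_diag_iff (S : Setup P X Y) {f : Set (Ω × Ω)} (hf : f ∈ Dset P X Y)
    {p q : Ω × Ω} (hp : p ∈ f) (hq : q ∈ f) : p.1 = p.2 ↔ q.1 = q.2 := by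
  have aux : ∀ r s : Ω × Ω, r ∈ f → s ∈ f → r.1 = r.2 → s.1 = s.2 := by
    intro r s hr hs hd
    rcases mem_Dset.mp hf with ⟨hfP, -⟩ | ⟨hfP, -⟩ | rfl | rfl
    · have hr' : (r.1, r.1) ∈ f := by
        have : (r.1, r.2) ∈ f := by rwa [Prod.mk.eta]
        rwa [← hd] at this
      rcases S.diag_class hfP hr' with h | h
      · have := h ▸ hs
        exact this.1
      · have := h ▸ hs
        exact this.1
    · have hr' : (r.1, r.1) ∈ f := by
        have : (r.1, r.2) ∈ f := by rwa [Prod.mk.eta]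
        rwa [← hd] at this
      rcases S.diag_class hfP hr' with h | h
      · have := h ▸ hs
        exact this.1
      · have := h ▸ hs
        exact this.1
    · exact absurd (hd ▸ hr.1) (fun hh => S.not_both hh hr.2)
    · exact absurd (hd ▸ hr.1) (fun hh => S.not_both hr.2 hh)
  exact ⟨aux p q hp hq, aux q p hq hp⟩

lemma D_refines (S : Setup P X Y) {f : Set (Ω × Ω)} (hf : f ∈ Dset P X Y)
    {c : Set (Ω × Ω)} (hc : c ∈ P) : f ⊆ c ∨ f ∩ c = ∅ := by
  rcases mem_Dset.mp hf with ⟨hfP, -⟩ | ⟨hfP, -⟩ | rfl | rfl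
  · by_cases hfc : f = c
    · exact Or.inl (hfc ▸ Set.Subset.rfl)
    · exact Or.inr (S.part.2.1 f hfP c hc hfc)
  · by_cases hfc : f = c
    · exact Or.inl (hfc ▸ Set.Subset.rfl)
    · exact Or.inr (S.part.2.1 f hfP c hc hfc)
  · by_cases hcc : c = X ×ˢ Y ∪ Y ×ˢ X
    · subst hcc
      exact Or.inl Set.subset_union_left
    · right
      have hdis := S.part.2.1 (X ×ˢ Y ∪ Y ×ˢ X) S.crossMem c hc (Ne.symm hcc)
      apply Set.eq_empty_of_subset_empty
      rw [← hdis]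
      exact Set.inter_subset_inter_left c Set.subset_union_left
  · by_cases hcc : c = X ×ˢ Y ∪ Y ×ˢ X
    · subst hcc
      exact Or.inl Set.subset_union_right
    · right
      have hdis := S.part.2.1 (X ×ˢ Y ∪ Y ×ˢ X) S.crossMem c hc (Ne.symm hcc)
      apply Set.eq_empty_of_subset_empty
      rw [← hdis]
      exact Set.inter_subset_inter_left c Set.subset_union_right

lemma adj_mem_Bmod (S : Setup P X Y) {c : Set (Ω × Ω)} (hc : c ∈ P) :
    adj ℝ c ∈ Bmod (Dset P X Y) := by
  intro f hf p hp q hq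
  rw [adj_apply, adj_apply]
  rcases S.D_refines hf hc with h | h
  · rw [if_pos (by rw [Prod.mk.eta]; exact h hp), if_pos (by rw [Prod.mk.eta]; exact h hq)]
  · have h1 : p ∉ c := fun hh => by
      have : p ∈ f ∩ c := ⟨hp, hh⟩
      rw [h] at this; exact this
    have h2 : q ∉ c := fun hh => by
      have : q ∈ f ∩ c := ⟨hq, hh⟩
      rw [h] at this; exact this
    rw [if_neg (by rw [Prod.mk.eta]; exact h1), if_neg (by rw [Prod.mk.eta]; exact h2)]

lemma adj_transpose (S : Setup P X Y) {c : Set (Ω × Ω)} (hc : c ∈ P) :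
    (adj ℝ c)ᵀ = adj ℝ c := by
  ext a b
  rw [Matrix.transpose_apply, adj_apply, adj_apply]
  exact if_congr (S.mem_symm hc) rfl rfl

lemma one_mem_Bmod (S : Setup P X Y) : (1 : Matrix Ω Ω ℝ) ∈ Bmod (Dset P X Y) := by
  intro f hf p hp q hq
  rw [Matrix.one_apply, Matrix.one_apply]
  exact if_congr (S.D_diag_iff hf hp hq) rfl rfl

lemma allOnes_mem_Bmod (S : Setup P X Y) : (allOnes ℝ : Matrix Ω Ω ℝ) ∈ Bmod (Dset P X Y) := by
  intro f hf p hp q hq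
  rfl

lemma transpose_mem_Bmod (S : Setup P X Y) {x : Matrix Ω Ω ℝ} (hx : x ∈ Bmod (Dset P X Y)) :
    xᵀ ∈ Bmod (Dset P X Y) := by
  intro f hf p hp q hq
  have hft : transposeRel f ∈ Dset P X Y := (S.D_rainbow).2.2 f hf
  have hp' : (p.2, p.1) ∈ transposeRel f := by
    show (p.1, p.2) ∈ f
    rwa [Prod.mk.eta]
  have hq' : (q.2, q.1) ∈ transposeRel f := by
    show (q.1, q.2) ∈ f
    rwa [Prod.mk.eta]
  exact hx (transposeRel f) hft (p.2, p.1) hp' (q.2, q.1) hq'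

lemma hadamard_mem_Bmod (S : Setup P X Y) {x y : Matrix Ω Ω ℝ}
    (hx : x ∈ Bmod (Dset P X Y)) (hy : y ∈ Bmod (Dset P X Y)) :
    Matrix.hadamard x y ∈ Bmod (Dset P X Y) := by
  intro f hf p hp q hq
  rw [Matrix.hadamard_apply, Matrix.hadamard_apply, hx f hf p hp q hq, hy f hf p hp q hq]

lemma mul_mem_Bmod [Nonempty Ω] (S : Setup P X Y) {x y : Matrix Ω Ω ℝ}
    (hx : x ∈ Bmod (Dset P X Y)) (hy : y ∈ Bmod (Dset P X Y)) :
    x * y ∈ Bmod (Dset P X Y) := by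
  have hDpart := S.D_partition
  set Df := (Set.toFinite (Dset P X Y)).toFinset with hDf
  let rep : Set (Ω × Ω) → Ω × Ω := fun c =>
    if h : c.Nonempty then h.some else Classical.arbitrary _
  have hrepmem : ∀ c ∈ Dset P X Y, rep c ∈ c := by
    intro c hc
    have hne := hDpart.1 c hc
    simp only [rep, dif_pos hne]
    exact hne.some_mem
  have key : ∀ a b : Ω, (x * y) a b =
      ∑ c ∈ Df, ∑ d ∈ Df,
        x (rep c).1 (rep c).2 * y (rep d).1 (rep d).2 * (cnum c d a b : ℝ) := by
    intro a b
    rw [Matrix.mul_apply]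
    have step1 : ∀ γ : Ω, x a γ * y γ b =
        ∑ c ∈ Df, (if (a, γ) ∈ c then
          (∑ d ∈ Df, (if (γ, b) ∈ d then
            x (rep c).1 (rep c).2 * y (rep d).1 (rep d).2 else 0)) else 0) := by
      intro γ
      obtain ⟨c₀, hc₀, hm₀⟩ := hDpart.exists_mem (a, γ)
      obtain ⟨d₀, hd₀, hm₀'⟩ := hDpart.exists_mem (γ, b)
      rw [sum_over_partition hDpart (a, γ) _ hc₀ hm₀,
        sum_over_partition hDpart (γ, b) _ hd₀ hm₀']
      rw [hx c₀ hc₀ (a, γ) hm₀ (rep c₀) (hrepmem c₀ hc₀),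
        hy d₀ hd₀ (γ, b) hm₀' (rep d₀) (hrepmem d₀ hd₀)]
    calc ∑ γ, x a γ * y γ b
        = ∑ γ, ∑ c ∈ Df, (if (a, γ) ∈ c then
            (∑ d ∈ Df, (if (γ, b) ∈ d then
              x (rep c).1 (rep c).2 * y (rep d).1 (rep d).2 else 0)) else 0) := by
          exact Finset.sum_congr rfl (fun γ _ => step1 γ)
      _ = ∑ c ∈ Df, ∑ γ, (if (a, γ) ∈ c then
            (∑ d ∈ Df, (if (γ, b) ∈ d then
              x (rep c).1 (rep c).2 * y (rep d).1 (rep d).2 else 0)) else 0) := by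
          rw [Finset.sum_comm]
      _ = ∑ c ∈ Df, ∑ γ, ∑ d ∈ Df, (if (a, γ) ∈ c ∧ (γ, b) ∈ d then
            x (rep c).1 (rep c).2 * y (rep d).1 (rep d).2 else 0) := by
          refine Finset.sum_congr rfl (fun c _ => Finset.sum_congr rfl (fun γ _ => ?_))
          by_cases hA : (a, γ) ∈ c <;> simp [hA]
      _ = ∑ c ∈ Df, ∑ d ∈ Df, ∑ γ, (if (a, γ) ∈ c ∧ (γ, b) ∈ d then
            x (rep c).1 (rep c).2 * y (rep d).1 (rep d).2 else 0) := by
          exact Finset.sum_congr rfl (fun c _ => Finset.sum_comm)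
      _ = ∑ c ∈ Df, ∑ d ∈ Df,
            x (rep c).1 (rep c).2 * y (rep d).1 (rep d).2 * (cnum c d a b : ℝ) := by
          refine Finset.sum_congr rfl (fun c _ => Finset.sum_congr rfl (fun d _ => ?_))
          rw [cnum_filter, ← Finset.sum_filter, Finset.sum_const, nsmul_eq_mul]
          ring
  intro f hf p hp q hq
  rw [key p.1 p.2, key q.1 q.2]
  refine Finset.sum_congr rfl (fun c hc => Finset.sum_congr rfl (fun d hd => ?_))
  have := S.D_coherent c ((Set.toFinite _).mem_toFinset.mp hc) d
    ((Set.toFinite _).mem_toFinset.mp hd) f hf p hp q hq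
  rw [this]

end Setup

end Lemmas7
section Lemmas8

set_option linter.unusedSectionVars false

variable [Fintype Ω] [DecidableEq Ω] {P : Set (Set (Ω × Ω))} {X Y : Set Ω}

namespace Setup

lemma Bmod_coherent [Nonempty Ω] (S : Setup P X Y) :
    IsCoherentAlgebra ℝ (Bmod (Dset P X Y)) :=
  ⟨S.one_mem_Bmod, S.allOnes_mem_Bmod, fun _ hx => S.transpose_mem_Bmod hx,
   fun _ hx _ hy => S.mul_mem_Bmod hx hy, fun _ hx _ hy => S.hadamard_mem_Bmod hx hy⟩

lemma Bmod_const_P (S : Setup P X Y) {x : Matrix Ω Ω ℝ}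
    (hx : x ∈ Bmod (Dset P X Y)) (hxt : xᵀ = x) :
    ∀ f ∈ P, ∀ p ∈ f, ∀ q ∈ f, x p.1 p.2 = x q.1 q.2 := by
  intro f hf p hp q hq
  rcases S.blocks hf with hB | hB | hB
  · exact hx f (mem_Dset.mpr (Or.inl ⟨hf, hB⟩)) p hp q hq
  · exact hx f (mem_Dset.mpr (Or.inr (Or.inl ⟨hf, hB⟩))) p hp q hq
  · obtain ⟨x₁, hx₁⟩ := S.neX
    obtain ⟨x₂, hx₂⟩ := S.neY
    have hXYmem : X ×ˢ Y ∈ Dset P X Y := mem_Dset.mpr (Or.inr (Or.inr (Or.inl rfl)))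
    have hval : ∀ r : Ω × Ω, r ∈ (X ×ˢ Y ∪ Y ×ˢ X) → x r.1 r.2 = x x₁ x₂ := by
      rintro ⟨r1, r2⟩ (hr | hr)
      · exact hx (X ×ˢ Y) hXYmem (r1, r2) hr (x₁, x₂) ⟨hx₁, hx₂⟩
      · have h12 : x r1 r2 = x r2 r1 := by
          conv_lhs => rw [← hxt]
          exact Matrix.transpose_apply x r1 r2
        rw [h12]
        exact hx (X ×ˢ Y) hXYmem (r2, r1) ⟨hr.2, hr.1⟩ (x₁, x₂) ⟨hx₁, hx₂⟩
    rw [hval p (hB hp), hval q (hB hq)]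

lemma Bmod_symm_in_span [Nonempty Ω] (S : Setup P X Y) {x : Matrix Ω Ω ℝ}
    (hx : x ∈ Bmod (Dset P X Y)) (hxt : xᵀ = x) :
    x ∈ Submodule.span ℝ (adj ℝ '' P) := by
  have hconst := S.Bmod_const_P hx hxt
  set Pf := (Set.toFinite P).toFinset with hPf
  let rep : Set (Ω × Ω) → Ω × Ω := fun c =>
    if h : c.Nonempty then h.some else Classical.arbitrary _
  have hrepmem : ∀ c ∈ P, rep c ∈ c := by
    intro c hc
    have hne := S.part.1 c hc
    simp only [rep, dif_pos hne]
    exact hne.some_mem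
  have hxeq : x = ∑ f ∈ Pf, x (rep f).1 (rep f).2 • adj ℝ f := by
    ext a b
    rw [Matrix.sum_apply]
    obtain ⟨f₀, hf₀, hm₀⟩ := S.part.exists_mem (a, b)
    have hstep : ∑ f ∈ Pf, (x (rep f).1 (rep f).2 • adj ℝ f) a b
        = ∑ f ∈ Pf, (if (a, b) ∈ f then x (rep f).1 (rep f).2 else 0) := by
      refine Finset.sum_congr rfl (fun f _ => ?_)
      rw [Matrix.smul_apply, adj_apply, smul_eq_mul]
      split_ifs <;> ring
    rw [hstep, sum_over_partition S.part (a, b) _ hf₀ hm₀]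
    exact (hconst f₀ hf₀ (rep f₀) (hrepmem f₀ hf₀) (a, b) hm₀).symm
  rw [hxeq]
  exact Submodule.sum_mem _ (fun f hf => Submodule.smul_mem _ _
    (Submodule.subset_span ⟨f, (Set.toFinite P).mem_toFinset.mp hf, rfl⟩))

lemma span_adj_eq [Nonempty Ω] (S : Setup P X Y) :
    (Submodule.span ℝ (adj ℝ '' P) : Set (Matrix Ω Ω ℝ)) =
      {x | x ∈ Bmod (Dset P X Y) ∧ xᵀ = x} := by
  ext x
  constructor
  · intro hx
    induction hx using Submodule.span_induction with
    | mem y h =>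
        obtain ⟨c, hcP, rfl⟩ := h
        exact ⟨S.adj_mem_Bmod hcP, S.adj_transpose hcP⟩
    | zero => exact ⟨(Bmod _).zero_mem, Matrix.transpose_zero⟩
    | add a b ha hb iha ihb =>
        exact ⟨(Bmod _).add_mem iha.1 ihb.1, by rw [Matrix.transpose_add, iha.2, ihb.2]⟩
    | smul r a ha iha =>
        exact ⟨(Bmod _).smul_mem r iha.1, by rw [Matrix.transpose_smul, iha.2]⟩
  · rintro ⟨h1, h2⟩
    exact S.Bmod_symm_in_span h1 h2

end Setup

end Lemmas8
theorem statement11 {Ω : Type*} [Fintype Ω] [DecidableEq Ω] [Nonempty Ω]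
    (P : Set (Set (Ω × Ω))) (hJC : IsJordanConfig P)
    (hsym : ∀ c ∈ P, transposeRel c = c)
    (hrank : P.ncard ≤ 5)
    (hnothom : diagRel (Set.univ : Set Ω) ∉ P) :
    ∃ Ω₁ Ω₂ : Set Ω,
      Ω₁.Nonempty ∧ Ω₂.Nonempty ∧ Ω₁ ∩ Ω₂ = ∅ ∧ Ω₁ ∪ Ω₂ = Set.univ ∧
      diagRel Ω₁ ∈ P ∧ diagRel Ω₂ ∈ P ∧
      (∀ Δ : Set Ω, Δ.Nonempty → diagRel Δ ∈ P → Δ = Ω₁ ∨ Δ = Ω₂) ∧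
      ((Ω₁ ×ˢ Ω₂) ∪ (Ω₂ ×ˢ Ω₁)) ∈ P ∧
      IsAssocSchemeOn Ω₁ {c | c ∈ P ∧ c ⊆ Ω₁ ×ˢ Ω₁} ∧
      IsAssocSchemeOn Ω₂ {c | c ∈ P ∧ c ⊆ Ω₂ ×ˢ Ω₂} ∧
      (∀ c ∈ P, c ⊆ Ω₁ ×ˢ Ω₁ → transposeRel c = c) ∧
      (∀ c ∈ P, c ⊆ Ω₂ ×ˢ Ω₂ → transposeRel c = c) ∧
      (let D : Set (Set (Ω × Ω)) :=
        {c | c ∈ P ∧ c ⊆ Ω₁ ×ˢ Ω₁} ∪ {c | c ∈ P ∧ c ⊆ Ω₂ ×ˢ Ω₂} ∪ {Ω₁ ×ˢ Ω₂, Ω₂ ×ˢ Ω₁}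
       IsCoherentConfig D ∧ {e | ∃ c ∈ D, e = c ∪ transposeRel c} = P) ∧
      (∃ B : Submodule ℝ (Matrix Ω Ω ℝ), IsCoherentAlgebra ℝ B ∧
        (Submodule.span ℝ (adj ℝ '' P) : Set (Matrix Ω Ω ℝ)) = {x | x ∈ B ∧ xᵀ = x}) := by
  classical
  obtain ⟨hR, hJ⟩ := hJC
  have hP : IsPartition P := hR.1
  -- every class containing a diagonal point is a diagonal class
  have hdiag : ∀ c ∈ P, ∀ a : Ω, (a, a) ∈ c → c = diagRel {x : Ω | (x, x) ∈ c} := by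
    intro c hc a hm
    have hsub : c ⊆ diagRel Set.univ := hR.2.1 c hc ⟨(a, a), hm, rfl, trivial⟩
    ext ⟨u, v⟩
    constructor
    · intro huv
      have huvd : u = v := (hsub huv).1
      subst huvd
      exact ⟨rfl, huv⟩
    · rintro ⟨huv, hm2⟩
      have hv : u = v := huv
      subst hv
      exact hm2
  have hdisj_gen : ∀ (c c' : Set (Ω × Ω)), c ∈ P → c' ∈ P → c ≠ c' →
      {x : Ω | (x, x) ∈ c} ∩ {x : Ω | (x, x) ∈ c'} = ∅ := by
    intro c c' hc hc' hne
    ext v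
    simp only [Set.mem_inter_iff, Set.mem_setOf_eq, Set.mem_empty_iff_false, iff_false, not_and]
    intro h1 h2
    exact hne (hP.class_unique hc hc' h1 h2)
  obtain ⟨α₀⟩ := (inferInstance : Nonempty Ω)
  obtain ⟨c₀, hc₀, hm₀⟩ := hP.exists_mem (α₀, α₀)
  set Ω₁ : Set Ω := {x : Ω | (x, x) ∈ c₀} with hΩ₁def
  have hc₀eq : c₀ = diagRel Ω₁ := hdiag c₀ hc₀ α₀ hm₀
  have hd₁ : diagRel Ω₁ ∈ P := hc₀eq ▸ hc₀
  have hne₁ : Ω₁.Nonempty := ⟨α₀, hm₀⟩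
  have hex2 : ∃ z, z ∉ Ω₁ := by
    by_contra h
    push_neg at h
    have hu : Ω₁ = Set.univ := Set.eq_univ_of_forall h
    exact hnothom (by rw [← hu]; exact hd₁)
  obtain ⟨z₀, hz₀⟩ := hex2
  obtain ⟨c₁, hc₁, hm₁⟩ := hP.exists_mem (z₀, z₀)
  set Ω₂ : Set Ω := {x : Ω | (x, x) ∈ c₁} with hΩ₂def
  have hc₁eq : c₁ = diagRel Ω₂ := hdiag c₁ hc₁ z₀ hm₁
  have hd₂ : diagRel Ω₂ ∈ P := hc₁eq ▸ hc₁
  have hz₀2 : z₀ ∈ Ω₂ := hm₁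
  have hc₀c₁ : c₀ ≠ c₁ := by
    rintro rfl
    exact hz₀ hm₁
  have hdisj : Ω₁ ∩ Ω₂ = ∅ := hdisj_gen c₀ c₁ hc₀ hc₁ hc₀c₁
  have hcover : Ω₁ ∪ Ω₂ = Set.univ := by
    apply Set.eq_univ_of_forall
    intro w
    by_cases hw1 : w ∈ Ω₁
    · exact Or.inl hw1
    obtain ⟨c₂, hc₂, hm₂⟩ := hP.exists_mem (w, w)
    by_cases he : c₂ = c₁
    · right
      show (w, w) ∈ c₁
      rw [← he]
      exact hm₂
    · exfalso
      have hc₂eq : c₂ = diagRel {x : Ω | (x, x) ∈ c₂} := hdiag c₂ hc₂ w hm₂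
      have hd₃ : diagRel {x : Ω | (x, x) ∈ c₂} ∈ P := hc₂eq ▸ hc₂
      have hc₀c₂ : c₀ ≠ c₂ := by
        rintro rfl
        exact hw1 hm₂
      exact three_fibers_false hP hJ hsym hrank hd₁ hd₂ hd₃
        hne₁ ⟨z₀, hz₀2⟩ ⟨w, hm₂⟩ hdisj
        (hdisj_gen c₀ c₂ hc₀ hc₂ hc₀c₂)
        (hdisj_gen c₁ c₂ hc₁ hc₂ (fun hh => he hh.symm))
  have S : Setup P Ω₁ Ω₂ :=
    ⟨hR, hJ, hsym, hrank, hd₁, hd₂, hdisj, hcover, hne₁, ⟨z₀, hz₀2⟩⟩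
  refine ⟨Ω₁, Ω₂, hne₁, ⟨z₀, hz₀2⟩, hdisj, hcover, hd₁, hd₂,
    (fun Δ hΔne hΔ => S.fiber_unique hΔne hΔ), S.crossMem,
    S.assocX, Setup.assocX S.swap,
    (fun c hc _ => hsym c hc), (fun c hc _ => hsym c hc),
    ⟨⟨S.D_rainbow, S.D_coherent⟩, S.D_symmize⟩,
    ⟨Bmod (Dset P Ω₁ Ω₂), S.Bmod_coherent, S.span_adj_eq⟩⟩

end JordanPaper
end
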